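/- (Necessity direction of the main theorem.) Assume 2s̄ ≤ p. Suppose the system is not 2s̄-sparse τ-observable, i.e., there exist an input sequence u ∈ U^{τ−1} and a set Γ ⊆ {1,…,p} with |Γ| = 2s̄ such that the map H_{u,Γ̄} is not injective. Then there exist an actual state x* ∈ X, an attack E* with |supp(E*)| ≤ s̄ (giving measurements Y_i = H_{u,i}(x*) + E*_i), and a pair (x,b) ∈ X × {0,1}^p satisfying the formula φ with x ≠ x*. -/

import Mathlib

/-- Trajectory of the discrete-time system `x_{j+1} = f (x_j) (u_j)` started at `x`. -/
def traj {X U : Type*} (f : X → U → X) (u : ℕ → U) (x : X) : ℕ → X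
  | 0 => x
  | j + 1 => f (traj f u x j) (u j)

/-- Window measurement map of sensor `i` over a window of length `τ`:
`H_{u,i}(x) = (h_i(x₀), …, h_i(x_{τ-1}))`. -/
def Hmap {X U : Type*} {p : ℕ} (f : X → U → X) (h : X → Fin p → ℝ) (τ : ℕ)
    (u : ℕ → U) (i : Fin p) (x : X) : Fin τ → ℝ :=
  fun j => h (traj f u x (j : ℕ)) i

/-- necessity of `2s̄`-sparse `τ`-observability. -/
theorem stmt3 {X U : Type*} {p τ sbar : ℕ} (hτ : 1 ≤ τ) (hp : 2 * sbar ≤ p)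
    (f : X → U → X) (h : X → Fin p → ℝ)
    (u : ℕ → U) (Γ : Finset (Fin p)) (hΓ : Γ.card = 2 * sbar)
    (hninj : ¬ Function.Injective
      (fun x : X => fun i : {i : Fin p // i ∉ Γ} => Hmap f h τ u i.1 x)) :
    ∃ (xstar : X) (Estar : Fin p → Fin τ → ℝ) (x : X) (b : Fin p → Bool),
      Set.ncard {i : Fin p | Estar i ≠ 0} ≤ sbar ∧
      (∀ i, b i = false → Hmap f h τ u i xstar + Estar i = Hmap f h τ u i x) ∧
      Set.ncard {i : Fin p | b i = true} ≤ sbar ∧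
      x ≠ xstar := by
  simp only [Function.Injective, not_forall] at hninj
  obtain ⟨x1, x2, heq, hne⟩ := hninj
  obtain ⟨Γ1, hΓ1sub, hΓ1card⟩ : ∃ Γ1 ⊆ Γ, Γ1.card = sbar := by
    exact Finset.exists_subset_card_eq (by omega)
  refine ⟨x1, fun i => if i ∈ Γ1 then Hmap f h τ u i x2 - Hmap f h τ u i x1 else 0,
    x2, fun i => decide (i ∈ Γ \ Γ1), ?_, ?_, ?_, fun hc => hne (hc ▸ rfl)⟩
  · refine le_trans (Set.ncard_le_ncard ?_ Γ1.finite_toSet) ?_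
    · intro i hi
      simp only [Set.mem_setOf_eq] at hi
      by_contra hmem
      rw [Finset.mem_coe] at hmem
      simp [hmem] at hi
    · simp [Set.ncard_coe_finset, hΓ1card]
  · intro i hb
    simp only [decide_eq_false_iff_not, Finset.mem_sdiff, not_and, not_not] at hb
    by_cases hi : i ∈ Γ1
    · simp only [hi, if_true]
      abel
    · have hiΓ : i ∉ Γ := fun hG => hi (hb hG)
      have := congrFun heq ⟨i, hiΓ⟩
      simp only at this
      simp [hi, this]
  · refine le_trans (Set.ncard_le_ncard ?_ (Γ \ Γ1).finite_toSet) ?_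
    · intro i hi
      simpa using hi
    · rw [Set.ncard_coe_finset, Finset.card_sdiff_of_subset hΓ1sub, hΓ, hΓ1card]
      omega
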